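/- Let p be a prime, ω = exp(2πi/p) ∈ ℂ, and f : ℤ/pℤ → ℤ/pℤ a function. Suppose that for every b ∈ ℤ/pℤ the average μ_f^{1,b} = (1/p) · ∑_{x ∈ ℤ/pℤ} ω^{f(x) + b·x} is an algebraic integer. Then f is a linear polynomial function: there exist α, β ∈ ℤ/pℤ such that f(x) = α·x + β for all x ∈ ℤ/pℤ. -/

import Mathlib

open Polynomial Finset

-- sum over ZMod p as sum over range p
lemma sum_zmod_eq_sum_range {p : ℕ} [NeZero p] {M : Type*} [AddCommMonoid M] (F : ZMod p → M) :
    ∑ c : ZMod p, F c = ∑ j ∈ Finset.range p, F ((j : ℕ) : ZMod p) := by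
  refine (Finset.sum_nbij' (i := fun j => ((j : ℕ) : ZMod p)) (j := fun c => c.val)
    ?_ ?_ ?_ ?_ ?_).symm
  · intro j _; exact Finset.mem_univ _
  · intro c _; exact Finset.mem_range.mpr (ZMod.val_lt c)
  · intro j hj; exact ZMod.val_natCast_of_lt (Finset.mem_range.mp hj)
  · intro c _; exact ZMod.natCast_zmod_val c
  · intro j _; rfl

-- Lemma B: kernel of the evaluation map has constant coefficients
lemma coeff_const_of_sum_eq_zero {p : ℕ} [NeZero p] (hp : p.Prime) {ω : ℂ} (hω : IsPrimitiveRoot ω p)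
    (A : ZMod p → ℤ) (hA : ∑ c : ZMod p, (A c : ℂ) * ω ^ c.val = 0) :
    ∀ c c' : ZMod p, A c = A c' := by
  have hp1 : 1 < p := hp.one_lt
  set t : ℤ := A ((p - 1 : ℕ) : ZMod p) with ht
  -- rewrite sum over range p
  rw [sum_zmod_eq_sum_range] at hA
  have hA' : ∑ j ∈ Finset.range p, ((A (j : ZMod p) : ℂ)) * ω ^ j = 0 := by
    rw [← hA]
    refine Finset.sum_congr rfl fun j hj => ?_
    rw [ZMod.val_natCast_of_lt (Finset.mem_range.mp hj)]
  have hgeom : ∑ j ∈ Finset.range p, ω ^ j = 0 := hω.geom_sum_eq_zero hp1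
  have hT : ∑ j ∈ Finset.range p, ((A (j : ZMod p) - t : ℤ) : ℂ) * ω ^ j = 0 := by
    have : ∑ j ∈ Finset.range p, ((A (j : ZMod p) - t : ℤ) : ℂ) * ω ^ j
        = (∑ j ∈ Finset.range p, ((A (j : ZMod p) : ℂ)) * ω ^ j)
          - (t : ℂ) * ∑ j ∈ Finset.range p, ω ^ j := by
      rw [Finset.mul_sum, ← Finset.sum_sub_distrib]
      refine Finset.sum_congr rfl fun j _ => ?_
      push_cast; ring
    rw [this, hA', hgeom]; ring
  -- top term vanishes
  have hps : p = (p - 1) + 1 := (Nat.succ_pred_eq_of_pos hp.pos).symm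
  have hT' : ∑ j ∈ Finset.range (p - 1), ((A (j : ZMod p) - t : ℤ) : ℂ) * ω ^ j = 0 := by
    have := hT
    rw [show Finset.range p = Finset.range ((p-1)+1) from by rw [← hps], Finset.sum_range_succ] at this
    simpa [← ht] using this
  -- linear independence of powers
  have hmin : minpoly ℚ ω = cyclotomic p ℚ := (cyclotomic_eq_minpoly_rat hω hp.pos).symm
  have hdeg : (minpoly ℚ ω).natDegree = p - 1 := by
    rw [hmin, natDegree_cyclotomic, Nat.totient_prime hp]
  have li := linearIndependent_pow (K := ℚ) (S := ℂ) ω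
  rw [hdeg] at li
  have hzero : ∀ j < p - 1, A (j : ZMod p) - t = 0 := by
    have hsum : ∑ i : Fin (p - 1), (((A ((i : ℕ) : ZMod p) - t : ℤ) : ℚ)) • ω ^ (i : ℕ) = 0 := by
      rw [Fin.sum_univ_eq_sum_range (fun j => (((A ((j : ℕ) : ZMod p) - t : ℤ) : ℚ)) • ω ^ j)]
      rw [← hT']
      refine Finset.sum_congr rfl fun j _ => ?_
      rw [Rat.smul_def]; push_cast; ring
    have := Fintype.linearIndependent_iff.mp li _ hsum
    intro j hj
    have := this ⟨j, hj⟩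
    exact_mod_cast this
  have hall : ∀ c : ZMod p, A c = t := by
    intro c
    have hc : c = ((c.val : ℕ) : ZMod p) := (ZMod.natCast_zmod_val c).symm
    have hlt : c.val < (p - 1) + 1 := by have := ZMod.val_lt c; omega
    rcases lt_or_eq_of_le (Nat.lt_succ_iff.mp hlt) with h | h
    · have := hzero c.val h
      rw [← hc] at this; omega
    · rw [hc, h]
  intro c c'; rw [hall c, hall c']

-- Lemma A: integral elements of Q(ω) expressible as aeval of integer polynomial
lemma exists_int_poly_of_isIntegral {p : ℕ} (hp : p.Prime) {ω : ℂ} (hω : IsPrimitiveRoot ω p)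
    (Q : ℚ[X]) (hint : IsIntegral ℤ (aeval ω Q)) :
    ∃ P : ℤ[X], aeval ω P = aeval ω Q := by
  set q : ℕ+ := ⟨p, hp.pos⟩ with hq
  let K := CyclotomicField q ℚ
  haveI : IsCyclotomicExtension {(q : ℕ)} ℚ K :=
    CyclotomicField.isCyclotomicExtension (q : ℕ) ℚ
  have hζ : IsPrimitiveRoot (IsCyclotomicExtension.zeta q ℚ K) q := IsCyclotomicExtension.zeta_spec q ℚ K
  set ζ := IsCyclotomicExtension.zeta q ℚ K
  have hpq : (q : ℕ) = p := rfl
  let pb : PowerBasis ℚ K := hζ.powerBasis ℚ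
  have hgen : pb.gen = ζ := hζ.powerBasis_gen ℚ
  have hroot : aeval ω (minpoly ℚ pb.gen) = 0 := by
    rw [hgen]
    have : minpoly ℚ ζ = cyclotomic p ℚ := by
      have := (cyclotomic_eq_minpoly_rat hζ q.pos).symm
      exact this
    rw [this, aeval_def, eval₂_eq_eval_map, map_cyclotomic]
    exact (hω.isRoot_cyclotomic hp.pos).eq_zero
  let φ : K →ₐ[ℚ] ℂ := pb.lift ω hroot
  have hφζ : φ ζ = ω := by rw [← hgen]; exact pb.lift_gen ω hroot
  let ψ : K →ₐ[ℤ] ℂ := AlgHom.mk' φ.toRingHom (fun c x => by simp [Algebra.smul_def])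
  have hψ : ∀ x : K, ψ x = φ x := fun x => rfl
  have hinj : Function.Injective ψ := RingHom.injective (ψ : K →+* ℂ)
  have hμK : IsIntegral ℤ (aeval ζ Q) := by
    rw [← isIntegral_algHom_iff ψ hinj]
    have : ψ (aeval ζ Q) = aeval ω Q := by
      rw [hψ, ← Polynomial.aeval_algHom_apply φ ζ Q, hφζ]
    rwa [this]
  haveI : Fact (Nat.Prime (q : ℕ)) := ⟨hp⟩
  haveI := IsCyclotomicExtension.Rat.isIntegralClosure_adjoin_singleton_of_prime (K := K) hζ
  obtain ⟨y, hy⟩ := (IsIntegralClosure.isIntegral_iff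
    (A := Algebra.adjoin ℤ ({ζ} : Set K)) (self := this)).mp hμK
  have hy2 := y.2
  have hy3 : (y : K) ∈ (Polynomial.aeval ζ : ℤ[X] →ₐ[ℤ] K).range :=
    SetLike.ext_iff.mp (Algebra.adjoin_singleton_eq_range_aeval ℤ ζ) (y : K) |>.mp hy2
  obtain ⟨P, hP⟩ := hy3
  refine ⟨P, ?_⟩
  have hyval : (y : K) = aeval ζ Q := hy
  have : aeval ζ P = aeval ζ Q := by rw [← hyval]; exact hP
  have hψζ : ψ ζ = ω := hφζ
  have happ : ψ (aeval ζ P) = aeval ω P := by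
    rw [← Polynomial.aeval_algHom_apply ψ ζ P, hψζ]
  rw [← happ, this, hψ, ← Polynomial.aeval_algHom_apply φ ζ Q, hφζ]

theorem linear_of_average_isIntegral_fixed_a_one
    (p : ℕ) [Fact p.Prime] (ω : ℂ) (hω : ω = Complex.exp (2 * Real.pi * Complex.I / p))
    (f : ZMod p → ZMod p)
    (h : ∀ b : ZMod p,
      IsIntegral ℤ ((1 / (p : ℂ)) * ∑ x : ZMod p, ω ^ (f x + b * x).val)) :
    ∃ α β : ZMod p, ∀ x : ZMod p, f x = α * x + β := by
  have hp : p.Prime := Fact.out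
  haveI : NeZero p := ⟨hp.ne_zero⟩
  have hωprim : IsPrimitiveRoot ω p := by
    rw [hω]; exact Complex.isPrimitiveRoot_exp p hp.ne_zero
  set b : ZMod p := f 0 - f 1 with hb
  set g : ZMod p → ZMod p := fun x => f x + b * x with hg
  have hg0 : g 0 = f 0 := by simp [hg]
  have hg1 : g 1 = f 0 := by simp [hg, hb]
  set N : ZMod p → ℕ := fun c => (Finset.univ.filter (fun x => g x = c)).card with hN
  have hNsum : ∑ c : ZMod p, N c = p := by
    have := Finset.card_eq_sum_card_fiberwise
      (f := g) (s := Finset.univ) (t := Finset.univ) (fun x _ => Finset.mem_univ _)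
    rw [Finset.card_univ, ZMod.card] at this
    exact this.symm
  have hint : IsIntegral ℤ ((1 / (p : ℂ)) * ∑ x : ZMod p, ω ^ (g x).val) := by
    have := h b
    simpa only [hg] using this
  have hstep1 : ∑ x : ZMod p, ω ^ (g x).val = ∑ c : ZMod p, (N c : ℂ) * ω ^ c.val := by
    rw [← Finset.sum_fiberwise Finset.univ g (fun x => ω ^ (g x).val)]
    refine Finset.sum_congr rfl fun c _ => ?_
    rw [Finset.sum_congr rfl (fun x hx => by
      rw [(Finset.mem_filter.mp hx).2] : ∀ x ∈ Finset.univ.filter (fun x => g x = c),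
        ω ^ (g x).val = ω ^ c.val)]
    rw [Finset.sum_const, nsmul_eq_mul]
  set Q : Polynomial ℚ :=
    Polynomial.C (1 / (p : ℚ)) * ∑ c : ZMod p, Polynomial.C ((N c : ℚ)) * Polynomial.X ^ (c.val)
    with hQdef
  have hQ : Polynomial.aeval ω Q = (1 / (p : ℂ)) * ∑ x : ZMod p, ω ^ (g x).val := by
    rw [hstep1, hQdef]
    simp only [map_mul, map_sum, Polynomial.aeval_C, map_pow, Polynomial.aeval_X]
    simp only [eq_ratCast]
    push_cast
    ring
  obtain ⟨P, hP⟩ := exists_int_poly_of_isIntegral hp hωprim Q (by rw [hQ]; exact hint)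
  set n := P.natDegree + 1 with hn
  set M : ZMod p → ℤ :=
    fun c => ∑ i ∈ (Finset.range n).filter (fun i => ((i : ℕ) : ZMod p) = c), P.coeff i with hM
  have hstep3 : Polynomial.aeval ω P = ∑ c : ZMod p, (M c : ℂ) * ω ^ c.val := by
    rw [Polynomial.aeval_eq_sum_range (x := ω)]
    rw [← Finset.sum_fiberwise (Finset.range n) (fun i => ((i : ℕ) : ZMod p))
      (fun i => P.coeff i • ω ^ i)]
    refine Finset.sum_congr rfl fun c _ => ?_
    have hterm : ∀ i ∈ (Finset.range n).filter (fun i => ((i : ℕ) : ZMod p) = c),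
        P.coeff i • ω ^ i = (P.coeff i : ℂ) * ω ^ c.val := by
      intro i hi
      obtain ⟨-, hi2⟩ := Finset.mem_filter.mp hi
      rw [zsmul_eq_mul]
      congr 1
      rw [← hi2, ZMod.val_natCast]
      exact pow_eq_pow_mod i hωprim.pow_eq_one
    rw [Finset.sum_congr rfl hterm, ← Finset.sum_mul, hM]
    push_cast
    ring
  have hpne : (p : ℂ) ≠ 0 := Nat.cast_ne_zero.mpr hp.ne_zero
  have key : ∑ c : ZMod p, (((N c : ℤ) - p * M c : ℤ) : ℂ) * ω ^ c.val = 0 := by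
    have e0 : Polynomial.aeval ω P = (1 / (p : ℂ)) * ∑ c : ZMod p, (N c : ℂ) * ω ^ c.val := by
      rw [hP, hQ, hstep1]
    rw [hstep3] at e0
    have e1 : ∑ c : ZMod p, (N c : ℂ) * ω ^ c.val
        = (p : ℂ) * ∑ c : ZMod p, (M c : ℂ) * ω ^ c.val := by
      rw [e0, ← mul_assoc, mul_one_div_cancel hpne, one_mul]
    have : ∑ c : ZMod p, (((N c : ℤ) - p * M c : ℤ) : ℂ) * ω ^ c.val
        = (∑ c : ZMod p, (N c : ℂ) * ω ^ c.val)
          - (p : ℂ) * ∑ c : ZMod p, (M c : ℂ) * ω ^ c.val := by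
      rw [Finset.mul_sum, ← Finset.sum_sub_distrib]
      refine Finset.sum_congr rfl fun c _ => ?_
      push_cast
      ring
    rw [this, e1]
    ring
  have hconst := coeff_const_of_sum_eq_zero hp hωprim (fun c => (N c : ℤ) - p * M c) key
  have hcong : ∀ c c' : ZMod p, (N c : ℤ) - N c' = p * (M c - M c') := by
    intro c c'
    have h1 := hconst c c'
    have : (N c : ℤ) - N c' = p * M c - p * M c' := by linarith
    rw [this]; ring
  have h01 : (0 : ZMod p) ≠ 1 := zero_ne_one
  have hN2 : 2 ≤ N (g 0) := by
    have hsub : ({0, 1} : Finset (ZMod p)) ⊆ Finset.univ.filter (fun x => g x = g 0) := by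
      intro x hx
      simp only [Finset.mem_insert, Finset.mem_singleton] at hx
      rcases hx with rfl | rfl
      · simp [Finset.mem_filter]
      · simp [Finset.mem_filter, hg1, hg0]
    have hcard := Finset.card_le_card hsub
    rwa [Finset.card_insert_of_notMem (by simp [h01]), Finset.card_singleton] at hcard
  have hex : ∃ c, N c = 0 := by
    by_contra hno
    push_neg at hno
    have hge : ∀ c, 1 ≤ N c := fun c => Nat.one_le_iff_ne_zero.mpr (hno c)
    have hsplit : ∑ c : ZMod p, N c
        = N (g 0) + ∑ c ∈ Finset.univ.erase (g 0), N c :=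
      (Finset.add_sum_erase _ _ (Finset.mem_univ _)).symm
    have htail : (Finset.univ.erase (g 0)).card ≤ ∑ c ∈ Finset.univ.erase (g 0), N c := by
      calc (Finset.univ.erase (g 0)).card = ∑ _c ∈ Finset.univ.erase (g 0), 1 := by
            rw [Finset.sum_const, smul_eq_mul, mul_one]
        _ ≤ ∑ c ∈ Finset.univ.erase (g 0), N c :=
            Finset.sum_le_sum fun c _ => hge c
    have hcarde : (Finset.univ.erase (g 0)).card = p - 1 := by
      rw [Finset.card_erase_of_mem (Finset.mem_univ _), Finset.card_univ, ZMod.card]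
    have hple := hp.two_le
    omega
  obtain ⟨c0, hc0⟩ := hex
  have hdvd : (p : ℤ) ∣ (N (g 0) : ℤ) := by
    have := hcong (g 0) c0
    rw [hc0] at this
    exact ⟨M (g 0) - M c0, by push_cast at this ⊢; linarith⟩
  have hdvdn : p ∣ N (g 0) := Int.ofNat_dvd.mp (by exact_mod_cast hdvd)
  have hle : N (g 0) ≤ p := by
    have := Finset.card_filter_le Finset.univ (fun x => g x = g 0)
    rwa [Finset.card_univ, ZMod.card] at this
  have hNp : N (g 0) = p := Nat.le_antisymm hle (Nat.le_of_dvd (by omega) hdvdn)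
  have huniv : Finset.univ.filter (fun x => g x = g 0) = Finset.univ := by
    apply Finset.eq_univ_of_card
    rw [show (Finset.univ.filter (fun x => g x = g 0)).card = N (g 0) from rfl, hNp, ZMod.card]
  have hgconst : ∀ x : ZMod p, g x = g 0 := by
    intro x
    have hx : x ∈ Finset.univ.filter (fun y => g y = g 0) := by
      rw [huniv]; exact Finset.mem_univ x
    exact (Finset.mem_filter.mp hx).2
  refine ⟨f 1 - f 0, f 0, fun x => ?_⟩
  have hx := hgconst x
  rw [hg0] at hx
  have hx' : f x + b * x = f 0 := hx
  linear_combination hx' - x * hb
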